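/- Let L be a finite lattice containing no crown of order 3 as a suborder. Then every interval of L is pure, and hence every 1-generated interval relation θ_S on L is lattice-generating, i.e., (L/θ_S, ≤_θ) is a lattice. -/

import Mathlib

open Classical

variable {L : Type*}

/-- The interval relation `θ_S` for the single interval `S = [u,v]`. -/
def irel [Preorder L] (u v : L) (x y : L) : Prop :=
  x = y ∨ (x ∈ Set.Icc u v ∧ y ∈ Set.Icc u v)

/-- `θ_S` as a setoid. -/
def irelSetoid [Preorder L] (u v : L) : Setoid L where
  r := irel u v
  iseqv := by
    constructor
    · intro x; exact Or.inl rfl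
    · rintro x y (rfl | ⟨hx, hy⟩)
      · exact Or.inl rfl
      · exact Or.inr ⟨hy, hx⟩
    · rintro x y z (rfl | ⟨hx, hy⟩) h
      · exact h
      · rcases h with rfl | ⟨hy', hz⟩
        · exact Or.inr ⟨hx, hy⟩
        · exact Or.inr ⟨hx, hz⟩

/-- `x_θ`, the least element of the class of `x`. -/
noncomputable def ilow [Preorder L] (u v : L) (x : L) : L :=
  if x ∈ Set.Icc u v then u else x

/-- `x^θ`, the greatest element of the class of `x`. -/
noncomputable def ihigh [Preorder L] (u v : L) (x : L) : L :=
  if x ∈ Set.Icc u v then v else x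

/-- `S↓`, the elements outside `S` strictly below some element of `S`. -/
def iSdown [Preorder L] (u v : L) : Set L :=
  {z | z ∉ Set.Icc u v ∧ ∃ s ∈ Set.Icc u v, z < s}

/-- `S↑`, the elements outside `S` strictly above some element of `S`. -/
def iSupSet [Preorder L] (u v : L) : Set L :=
  {z | z ∉ Set.Icc u v ∧ ∃ s ∈ Set.Icc u v, s < z}

/-- `S∥`, the elements outside `S` incomparable to all of `S`. -/
def iSpar [Preorder L] (u v : L) : Set L :=
  {z | z ∉ Set.Icc u v ∧ ∀ s ∈ Set.Icc u v, ¬ s < z ∧ ¬ z < s}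

/-- The relation `≤_θ` on representatives. -/
def ile [Preorder L] (u v : L) (x y : L) : Prop :=
  ilow u v x ≤ ihigh u v y ∨ (x ∈ iSdown u v ∧ y ∈ iSupSet u v)

/-- The induced relation `≤_θ` on the factor set `L/θ`. -/
def iLeQ [Preorder L] (u v : L) (a b : Quotient (irelSetoid u v)) : Prop :=
  ∃ x y : L, a = Quotient.mk (irelSetoid u v) x ∧ b = Quotient.mk (irelSetoid u v) y ∧
    ile u v x y

/-- `S` is a nested interval. -/
def iNested [Lattice L] (u v : L) : Prop :=
  ∃ x y a w : L, x ∈ iSpar u v ∧ y ∈ iSpar u v ∧ a ∈ iSupSet u v ∧ w ∈ iSdown u v ∧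
    y = x ⊔ w ∧ x = y ⊓ a ∧ ¬ y ≤ a ∧ ¬ w ≤ x




section Aux
variable {L : Type*} [Lattice L] {u v : L}

lemma ilow_le (u v x : L) : ilow u v x ≤ x := by
  unfold ilow; split
  · next h => exact h.1
  · exact le_rfl

lemma le_ihigh (u v x : L) : x ≤ ihigh u v x := by
  unfold ihigh; split
  · next h => exact h.2
  · exact le_rfl

lemma ilow_of_not_mem {x : L} (h : x ∉ Set.Icc u v) : ilow u v x = x := if_neg h
lemma ihigh_of_not_mem {x : L} (h : x ∉ Set.Icc u v) : ihigh u v x = x := if_neg h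
lemma ilow_of_mem {x : L} (h : x ∈ Set.Icc u v) : ilow u v x = u := if_pos h
lemma ihigh_of_mem {x : L} (h : x ∈ Set.Icc u v) : ihigh u v x = v := if_pos h

lemma mem_iSdown_iff (huv : u ≤ v) {z : L} :
    z ∈ iSdown u v ↔ z ∉ Set.Icc u v ∧ z ≤ v := by
  constructor
  · rintro ⟨h1, s, hs, h2⟩; exact ⟨h1, h2.le.trans hs.2⟩
  · rintro ⟨h1, h2⟩
    refine ⟨h1, v, ⟨huv, le_rfl⟩, lt_of_le_of_ne h2 ?_⟩
    rintro rfl; exact h1 ⟨huv, le_rfl⟩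

lemma mem_iSupSet_iff (huv : u ≤ v) {z : L} :
    z ∈ iSupSet u v ↔ z ∉ Set.Icc u v ∧ u ≤ z := by
  constructor
  · rintro ⟨h1, s, hs, h2⟩; exact ⟨h1, hs.1.trans h2.le⟩
  · rintro ⟨h1, h2⟩
    refine ⟨h1, u, ⟨le_rfl, huv⟩, lt_of_le_of_ne h2 ?_⟩
    rintro rfl; exact h1 ⟨le_rfl, huv⟩

lemma mem_iSpar_iff (huv : u ≤ v) {z : L} :
    z ∈ iSpar u v ↔ ¬ u ≤ z ∧ ¬ z ≤ v := by
  constructor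
  · rintro ⟨h1, h2⟩
    refine ⟨fun h => ?_, fun h => ?_⟩
    · exact (h2 u ⟨le_rfl, huv⟩).1 (lt_of_le_of_ne h (by rintro rfl; exact h1 ⟨le_rfl, huv⟩))
    · exact (h2 v ⟨huv, le_rfl⟩).2 (lt_of_le_of_ne h (by rintro rfl; exact h1 ⟨huv, le_rfl⟩))
  · rintro ⟨h1, h2⟩
    exact ⟨fun h => h1 h.1,
      fun s hs => ⟨fun h => h1 (hs.1.trans h.le), fun h => h2 (h.le.trans hs.2)⟩⟩

lemma ile_of_le {x y : L} (h : x ≤ y) : ile u v x y :=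
  Or.inl ((ilow_le u v x).trans (h.trans (le_ihigh u v y)))

lemma ile_refl' (u v x : L) : ile u v x x := ile_of_le le_rfl

lemma ile_trans' (huv : u ≤ v) {x y z : L} (h1 : ile u v x y) (h2 : ile u v y z) :
    ile u v x z := by
  rcases h1 with h1 | ⟨hxD, hyU⟩
  · rcases h2 with h2 | ⟨hyD, hzU⟩
    · by_cases hy : y ∈ Set.Icc u v
      · rw [ihigh_of_mem hy] at h1
        rw [ilow_of_mem hy] at h2
        by_cases hx : x ∈ Set.Icc u v
        · exact Or.inl (by rw [ilow_of_mem hx]; exact h2)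
        · by_cases hz : z ∈ Set.Icc u v
          · rw [ilow_of_not_mem hx] at h1
            exact Or.inl (by rw [ihigh_of_mem hz, ilow_of_not_mem hx]; exact h1)
          · rw [ilow_of_not_mem hx] at h1
            rw [ihigh_of_not_mem hz] at h2
            exact Or.inr ⟨(mem_iSdown_iff huv).2 ⟨hx, h1⟩, (mem_iSupSet_iff huv).2 ⟨hz, h2⟩⟩
      · rw [ihigh_of_not_mem hy] at h1
        rw [ilow_of_not_mem hy] at h2
        exact Or.inl (h1.trans h2)
    · have hy' := (mem_iSdown_iff huv).1 hyD
      rw [ihigh_of_not_mem hy'.1] at h1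
      have hx : x ∉ Set.Icc u v := by
        intro hx; rw [ilow_of_mem hx] at h1; exact hy'.1 ⟨h1, hy'.2⟩
      rw [ilow_of_not_mem hx] at h1
      exact Or.inr ⟨(mem_iSdown_iff huv).2 ⟨hx, h1.trans hy'.2⟩, hzU⟩
  · have hy' := (mem_iSupSet_iff huv).1 hyU
    rcases h2 with h2 | ⟨hyD, hzU⟩
    · rw [ilow_of_not_mem hy'.1] at h2
      have hz : z ∉ Set.Icc u v := by
        intro hz; rw [ihigh_of_mem hz] at h2; exact hy'.1 ⟨hy'.2, h2⟩
      rw [ihigh_of_not_mem hz] at h2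
      exact Or.inr ⟨hxD, (mem_iSupSet_iff huv).2 ⟨hz, hy'.2.trans h2⟩⟩
    · have h := (mem_iSdown_iff huv).1 hyD
      exact absurd ⟨hy'.2, h.2⟩ h.1

lemma ile_antisymm' (huv : u ≤ v) {x y : L} (h1 : ile u v x y) (h2 : ile u v y x) :
    irel u v x y := by
  rcases h1 with h1 | ⟨hxD, hyU⟩
  · rcases h2 with h2 | ⟨hyD, hxU⟩
    · by_cases hx : x ∈ Set.Icc u v <;> by_cases hy : y ∈ Set.Icc u v
      · exact Or.inr ⟨hx, hy⟩
      · rw [ilow_of_mem hx, ihigh_of_not_mem hy] at h1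
        rw [ilow_of_not_mem hy, ihigh_of_mem hx] at h2
        exact absurd ⟨h1, h2⟩ hy
      · rw [ilow_of_not_mem hx, ihigh_of_mem hy] at h1
        rw [ilow_of_mem hy, ihigh_of_not_mem hx] at h2
        exact absurd ⟨h2, h1⟩ hx
      · rw [ilow_of_not_mem hx, ihigh_of_not_mem hy] at h1
        rw [ilow_of_not_mem hy, ihigh_of_not_mem hx] at h2
        exact Or.inl (le_antisymm h1 h2)
    · have hy' := (mem_iSdown_iff huv).1 hyD
      have hx' := (mem_iSupSet_iff huv).1 hxU
      rw [ilow_of_not_mem hx'.1, ihigh_of_not_mem hy'.1] at h1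
      exact absurd ⟨hx'.2, h1.trans hy'.2⟩ hx'.1
  · have hx' := (mem_iSdown_iff huv).1 hxD
    have hy' := (mem_iSupSet_iff huv).1 hyU
    rcases h2 with h2 | ⟨hyD, hxU⟩
    · rw [ilow_of_not_mem hy'.1, ihigh_of_not_mem hx'.1] at h2
      exact absurd ⟨hy'.2.trans h2, hx'.2⟩ hx'.1
    · have hx'' := (mem_iSupSet_iff huv).1 hxU
      exact absurd ⟨hx''.2, hx'.2⟩ hx'.1

lemma ile_congr {x x' y y' : L} (hx : irel u v x' x) (hy : irel u v y' y)
    (h : ile u v x' y') : ile u v x y := by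
  rcases h with h | ⟨hD, hU⟩
  · left
    rcases hx with rfl | ⟨ha, hb⟩
    · rcases hy with rfl | ⟨hc, hd⟩
      · exact h
      · rw [ihigh_of_mem hd]; rw [ihigh_of_mem hc] at h; exact h
    · rcases hy with rfl | ⟨hc, hd⟩
      · rw [ilow_of_mem hb]; rw [ilow_of_mem ha] at h; exact h
      · rw [ilow_of_mem hb, ihigh_of_mem hd]; rw [ilow_of_mem ha, ihigh_of_mem hc] at h; exact h
  · right
    constructor
    · rcases hx with rfl | ⟨ha, hb⟩
      · exact hD
      · exact absurd ha hD.1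
    · rcases hy with rfl | ⟨hc, hd⟩
      · exact hU
      · exact absurd hc hU.1

lemma iLeQ_mk (u v x y : L) :
    iLeQ u v (Quotient.mk (irelSetoid u v) x) (Quotient.mk (irelSetoid u v) y) ↔
      ile u v x y := by
  constructor
  · rintro ⟨x', y', hx, hy, h⟩
    exact ile_congr ((irelSetoid u v).iseqv.symm (Quotient.exact hx))
      ((irelSetoid u v).iseqv.symm (Quotient.exact hy)) h
  · intro h; exact ⟨x, y, rfl, rfl, h⟩

/-- The key purity consequence. -/
lemma ile_key (huv : u ≤ v) (hp : ¬ iNested u v) {x y : L} (hxv : x ≤ v) (hux : ¬ u ≤ x)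
    (hyv : ¬ y ≤ v) (huy : ¬ u ≤ y) : u ≤ x ⊔ y ∨ x ≤ u ⊔ y := by
  by_contra h
  push_neg at h
  obtain ⟨h1, h2⟩ := h
  apply hp
  refine ⟨(x ⊔ y) ⊓ (u ⊔ y), x ⊔ y, u ⊔ y, x, ?_, ?_, ?_, ?_, ?_, rfl, ?_, ?_⟩
  · rw [mem_iSpar_iff huv]
    exact ⟨fun h => h1 (h.trans inf_le_left),
      fun h => hyv ((le_inf le_sup_right le_sup_right).trans h)⟩
  · rw [mem_iSpar_iff huv]
    exact ⟨h1, fun h => hyv (le_sup_right.trans h)⟩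
  · rw [mem_iSupSet_iff huv]
    exact ⟨fun h => hyv (le_sup_right.trans h.2), le_sup_left⟩
  · rw [mem_iSdown_iff huv]
    exact ⟨fun h => hux h.1, hxv⟩
  · exact le_antisymm (sup_le le_sup_right ((le_inf le_sup_right le_sup_right).trans le_sup_left))
      (sup_le inf_le_left le_sup_left)
  · exact fun h => h2 (le_sup_left.trans h)
  · exact fun h => h2 (h.trans inf_le_right)

lemma inot_nested (huv : u ≤ v)
    (hnc : ¬ ∃ x y : Fin 3 → L,
        (∀ i j, x i ≤ y j ↔ (j = i ∨ j = i + 1)) ∧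
        (∀ i j, i ≠ j → ¬ x i ≤ x j) ∧
        (∀ i j, i ≠ j → ¬ y i ≤ y j) ∧
        (∀ i j, ¬ y i ≤ x j)) : ¬ iNested u v := by
  rintro ⟨x, y, a, w, hx, hy, ha, hw, hyxw, hxya, hya, hwx⟩
  rw [mem_iSpar_iff huv] at hx hy
  rw [mem_iSupSet_iff huv] at ha
  rw [mem_iSdown_iff huv] at hw
  have hua : u ≤ a := ha.2
  have hwv : w ≤ v := hw.2
  have hxy : x ≤ y := by rw [hyxw]; exact le_sup_left
  have hwy : w ≤ y := by rw [hyxw]; exact le_sup_right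
  have hxa : x ≤ a := by rw [hxya]; exact inf_le_right
  have hww' : w ≤ y ⊓ v := le_inf hwy hwv
  have hyw' : y = x ⊔ (y ⊓ v) :=
    le_antisymm (hyxw.le.trans (sup_le_sup_left hww' x)) (sup_le hxy inf_le_left)
  have ha'a : x ⊔ u ≤ a := sup_le hxa hua
  have hw'a' : ¬ y ⊓ v ≤ x ⊔ u := fun h =>
    hya ((hyw'.le.trans (sup_le le_sup_left h)).trans ha'a)
  have n_xu : ¬ x ≤ u := fun h => hx.2 (h.trans huv)
  have n_xw' : ¬ x ≤ y ⊓ v := fun h => hx.2 (h.trans inf_le_right)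
  have n_uw' : ¬ u ≤ y ⊓ v := fun h => hy.1 (h.trans inf_le_left)
  have n_w'x : ¬ y ⊓ v ≤ x := fun h => hwx (hww'.trans h)
  have n_w'u : ¬ y ⊓ v ≤ u := fun h =>
    hya (by rw [hyxw]; exact sup_le hxa ((hww'.trans h).trans hua))
  have n_ya' : ¬ y ≤ x ⊔ u := fun h => hya (h.trans ha'a)
  have n_a'y : ¬ x ⊔ u ≤ y := fun h => hy.1 (le_sup_right.trans h)
  have n_a'v : ¬ x ⊔ u ≤ v := fun h => hx.2 (le_sup_left.trans h)
  have n_vy : ¬ v ≤ y := fun h => n_uw' (le_inf (huv.trans h) huv)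
  have n_va' : ¬ v ≤ x ⊔ u := fun h => hw'a' (inf_le_right.trans h)
  have n_yx : ¬ y ≤ x := fun h => hwx (hwy.trans h)
  have n_yu : ¬ y ≤ u := fun h => hy.2 (h.trans huv)
  have n_yw' : ¬ y ≤ y ⊓ v := fun h => hy.2 (h.trans inf_le_right)
  have n_a'x : ¬ x ⊔ u ≤ x := fun h => hx.1 (le_sup_right.trans h)
  have n_a'u : ¬ x ⊔ u ≤ u := fun h => n_a'v (h.trans huv)
  have n_a'w' : ¬ x ⊔ u ≤ y ⊓ v := fun h => n_a'v (h.trans inf_le_right)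
  have n_vx : ¬ v ≤ x := fun h => hx.1 (huv.trans h)
  have n_vu : ¬ v ≤ u := fun h => n_w'u (inf_le_right.trans h)
  have n_vw' : ¬ v ≤ y ⊓ v := fun h => n_vy (h.trans inf_le_left)
  apply hnc
  refine ⟨![x, u, y ⊓ v], ![y, x ⊔ u, v], ?_, ?_, ?_, ?_⟩
  · intro i j
    fin_cases i <;> fin_cases j
    · exact iff_of_true hxy (by decide)
    · exact iff_of_true le_sup_left (by decide)
    · exact iff_of_false hx.2 (by decide)
    · exact iff_of_false hy.1 (by decide)
    · exact iff_of_true le_sup_right (by decide)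
    · exact iff_of_true huv (by decide)
    · exact iff_of_true inf_le_left (by decide)
    · exact iff_of_false hw'a' (by decide)
    · exact iff_of_true inf_le_right (by decide)
  · intro i j hij
    fin_cases i <;> fin_cases j
    · exact absurd rfl hij
    · exact n_xu
    · exact n_xw'
    · exact hx.1
    · exact absurd rfl hij
    · exact n_uw'
    · exact n_w'x
    · exact n_w'u
    · exact absurd rfl hij
  · intro i j hij
    fin_cases i <;> fin_cases j
    · exact absurd rfl hij
    · exact n_ya'
    · exact hy.2
    · exact n_a'y
    · exact absurd rfl hij
    · exact n_a'v
    · exact n_vy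
    · exact n_va'
    · exact absurd rfl hij
  · intro i j
    fin_cases i <;> fin_cases j
    · exact n_yx
    · exact n_yu
    · exact n_yw'
    · exact n_a'x
    · exact n_a'u
    · exact n_a'w'
    · exact n_vx
    · exact n_vu
    · exact n_vw'

lemma ile_P_dest (huv : u ≤ v) {y d : L} (hyv : ¬ y ≤ v) (hyI : y ∉ Set.Icc u v)
    (h : ile u v y d) : d ∉ Set.Icc u v ∧ y ≤ d := by
  rcases h with h | ⟨h, _⟩
  · by_cases hdI : d ∈ Set.Icc u v
    · rw [ihigh_of_mem hdI, ilow_of_not_mem hyI] at h; exact absurd h hyv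
    · rw [ihigh_of_not_mem hdI, ilow_of_not_mem hyI] at h; exact ⟨hdI, h⟩
  · rw [mem_iSdown_iff huv] at h; exact absurd h.2 hyv

lemma ile_sup_icc (huv : u ≤ v) {x y : L} (hx : x ∈ Set.Icc u v)
    (huy : ¬ u ≤ y) (hyv : ¬ y ≤ v) :
    ∃ z, ile u v x z ∧ ile u v y z ∧ ∀ d, ile u v x d → ile u v y d → ile u v z d := by
  have hyI : y ∉ Set.Icc u v := fun h => huy h.1
  have hzI : u ⊔ y ∉ Set.Icc u v := fun h => hyv (le_sup_right.trans h.2)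
  refine ⟨u ⊔ y,
    Or.inl (by rw [ilow_of_mem hx]; exact le_sup_left.trans (le_ihigh u v _)),
    ile_of_le le_sup_right, ?_⟩
  intro d h1 h2
  obtain ⟨hdI, hyd⟩ := ile_P_dest huv hyv hyI h2
  have hud : u ≤ d := by
    rcases h1 with h1 | ⟨_, h1⟩
    · rw [ilow_of_mem hx, ihigh_of_not_mem hdI] at h1; exact h1
    · exact ((mem_iSupSet_iff huv).1 h1).2
  exact Or.inl (by rw [ilow_of_not_mem hzI, ihigh_of_not_mem hdI]; exact sup_le hud hyd)

lemma ile_sup_DP (huv : u ≤ v) (hp : ¬ iNested u v) {x y : L}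
    (hxI : x ∉ Set.Icc u v) (hxv : x ≤ v) (huy : ¬ u ≤ y) (hyv : ¬ y ≤ v) :
    ∃ z, ile u v x z ∧ ile u v y z ∧ ∀ d, ile u v x d → ile u v y d → ile u v z d := by
  have hux : ¬ u ≤ x := fun h => hxI ⟨h, hxv⟩
  have hyI : y ∉ Set.Icc u v := fun h => huy h.1
  rcases ile_key huv hp hxv hux hyv huy with hk | hk
  · have hzI : u ⊔ y ∉ Set.Icc u v := fun h => hyv (le_sup_right.trans h.2)
    refine ⟨u ⊔ y,
      Or.inr ⟨(mem_iSdown_iff huv).2 ⟨hxI, hxv⟩,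
        (mem_iSupSet_iff huv).2 ⟨hzI, le_sup_left⟩⟩,
      ile_of_le le_sup_right, ?_⟩
    intro d h1 h2
    obtain ⟨hdI, hyd⟩ := ile_P_dest huv hyv hyI h2
    have hle : u ⊔ y ≤ d := by
      rcases h1 with h1 | ⟨_, h1⟩
      · rw [ilow_of_not_mem hxI, ihigh_of_not_mem hdI] at h1
        exact sup_le (hk.trans (sup_le h1 hyd)) hyd
      · exact sup_le ((mem_iSupSet_iff huv).1 h1).2 hyd
    exact Or.inl (by rw [ilow_of_not_mem hzI, ihigh_of_not_mem hdI]; exact hle)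
  · have hzI : x ⊔ y ∉ Set.Icc u v := fun h => hyv (le_sup_right.trans h.2)
    refine ⟨x ⊔ y, ile_of_le le_sup_left, ile_of_le le_sup_right, ?_⟩
    intro d h1 h2
    obtain ⟨hdI, hyd⟩ := ile_P_dest huv hyv hyI h2
    have hle : x ⊔ y ≤ d := by
      rcases h1 with h1 | ⟨_, h1⟩
      · rw [ilow_of_not_mem hxI, ihigh_of_not_mem hdI] at h1
        exact sup_le h1 hyd
      · exact sup_le (hk.trans (sup_le ((mem_iSupSet_iff huv).1 h1).2 hyd)) hyd
    exact Or.inl (by rw [ilow_of_not_mem hzI, ihigh_of_not_mem hdI]; exact hle)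

lemma ile_sup (huv : u ≤ v) (hp : ¬ iNested u v) (x y : L) :
    ∃ z, ile u v x z ∧ ile u v y z ∧ ∀ d, ile u v x d → ile u v y d → ile u v z d := by
  by_cases h1 : ile u v x y
  · exact ⟨y, h1, ile_refl' u v y, fun d _ hd => hd⟩
  by_cases h2 : ile u v y x
  · exact ⟨x, ile_refl' u v x, h2, fun d hd _ => hd⟩
  by_cases hx : x ∈ Set.Icc u v
  · have huy : ¬ u ≤ y := fun h =>
      h1 (Or.inl (by rw [ilow_of_mem hx]; exact h.trans (le_ihigh u v y)))
    have hyv : ¬ y ≤ v := fun h =>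
      h2 (Or.inl (by rw [ihigh_of_mem hx]; exact (ilow_le u v y).trans h))
    exact ile_sup_icc huv hx huy hyv
  by_cases hy : y ∈ Set.Icc u v
  · have hux : ¬ u ≤ x := fun h =>
      h2 (Or.inl (by rw [ilow_of_mem hy]; exact h.trans (le_ihigh u v x)))
    have hxv : ¬ x ≤ v := fun h =>
      h1 (Or.inl (by rw [ihigh_of_mem hy]; exact (ilow_le u v x).trans h))
    obtain ⟨z, hz1, hz2, hz3⟩ := ile_sup_icc huv hy hux hxv
    exact ⟨z, hz2, hz1, fun d a b => hz3 d b a⟩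
  have hn1 : ¬ (x ≤ v ∧ u ≤ y) := fun h =>
    h1 (Or.inr ⟨(mem_iSdown_iff huv).2 ⟨hx, h.1⟩, (mem_iSupSet_iff huv).2 ⟨hy, h.2⟩⟩)
  have hn2 : ¬ (y ≤ v ∧ u ≤ x) := fun h =>
    h2 (Or.inr ⟨(mem_iSdown_iff huv).2 ⟨hy, h.1⟩, (mem_iSupSet_iff huv).2 ⟨hx, h.2⟩⟩)
  by_cases hxv : x ≤ v <;> by_cases hyv : y ≤ v
  · refine ⟨x ⊔ y, ile_of_le le_sup_left, ile_of_le le_sup_right, ?_⟩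
    intro d hd1 hd2
    by_cases hdU : d ∉ Set.Icc u v ∧ u ≤ d
    · by_cases hzI : x ⊔ y ∈ Set.Icc u v
      · exact Or.inl (by rw [ilow_of_mem hzI, ihigh_of_not_mem hdU.1]; exact hdU.2)
      · exact Or.inr ⟨(mem_iSdown_iff huv).2 ⟨hzI, sup_le hxv hyv⟩,
          (mem_iSupSet_iff huv).2 hdU⟩
    · have e1 : x ≤ ihigh u v d := by
        rcases hd1 with h | ⟨_, h⟩
        · rwa [ilow_of_not_mem hx] at h
        · exact absurd ((mem_iSupSet_iff huv).1 h) hdU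
      have e2 : y ≤ ihigh u v d := by
        rcases hd2 with h | ⟨_, h⟩
        · rwa [ilow_of_not_mem hy] at h
        · exact absurd ((mem_iSupSet_iff huv).1 h) hdU
      exact Or.inl ((ilow_le u v _).trans (sup_le e1 e2))
  · have huy : ¬ u ≤ y := fun h => hn1 ⟨hxv, h⟩
    exact ile_sup_DP huv hp hx hxv huy hyv
  · have hux : ¬ u ≤ x := fun h => hn2 ⟨hyv, h⟩
    obtain ⟨z, hz1, hz2, hz3⟩ := ile_sup_DP huv hp hy hyv hux hxv
    exact ⟨z, hz2, hz1, fun d a b => hz3 d b a⟩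
  · have hzI : x ⊔ y ∉ Set.Icc u v := fun h => hxv (le_sup_left.trans h.2)
    refine ⟨x ⊔ y, ile_of_le le_sup_left, ile_of_le le_sup_right, ?_⟩
    intro d hd1 hd2
    obtain ⟨hdI, hxd⟩ := ile_P_dest huv hxv hx hd1
    obtain ⟨-, hyd⟩ := ile_P_dest huv hyv hy hd2
    exact Or.inl (by rw [ilow_of_not_mem hzI, ihigh_of_not_mem hdI]; exact sup_le hxd hyd)

end Aux

/-- If a finite lattice contains no crown of order 3 as a suborder, then every
interval is pure and every 1-generated interval relation is lattice-generating. -/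
theorem no_crown_implies_latticeGenerating {L : Type*} [Lattice L] [Finite L]
    (hnc : ¬ ∃ x y : Fin 3 → L,
        (∀ i j, x i ≤ y j ↔ (j = i ∨ j = i + 1)) ∧
        (∀ i j, i ≠ j → ¬ x i ≤ x j) ∧
        (∀ i j, i ≠ j → ¬ y i ≤ y j) ∧
        (∀ i j, ¬ y i ≤ x j)) :
    ∀ u v : L, u ≤ v →
      (¬ iNested u v) ∧
      (Reflexive (iLeQ u v) ∧ Transitive (iLeQ u v) ∧
        (∀ a b : Quotient (irelSetoid u v), iLeQ u v a b → iLeQ u v b a → a = b) ∧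
        (∀ a b : Quotient (irelSetoid u v), ∃ c, iLeQ u v a c ∧ iLeQ u v b c ∧
          ∀ d, iLeQ u v a d → iLeQ u v b d → iLeQ u v c d) ∧
        (∀ a b : Quotient (irelSetoid u v), ∃ c, iLeQ u v c a ∧ iLeQ u v c b ∧
          ∀ d, iLeQ u v d a → iLeQ u v d b → iLeQ u v d c)) := by
  intro u v huv
  have hp : ¬ iNested u v := inot_nested huv hnc
  have hrefl : Reflexive (iLeQ u v) := by
    intro a
    obtain ⟨x, rfl⟩ := Quotient.exists_rep a
    exact (iLeQ_mk u v x x).2 (ile_refl' u v x)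
  have htrans : Transitive (iLeQ u v) := by
    intro a b c hab hbc
    obtain ⟨x, rfl⟩ := Quotient.exists_rep a
    obtain ⟨y, rfl⟩ := Quotient.exists_rep b
    obtain ⟨z, rfl⟩ := Quotient.exists_rep c
    exact (iLeQ_mk u v x z).2
      (ile_trans' huv ((iLeQ_mk u v x y).1 hab) ((iLeQ_mk u v y z).1 hbc))
  have hanti : ∀ a b : Quotient (irelSetoid u v), iLeQ u v a b → iLeQ u v b a → a = b := by
    intro a b hab hba
    obtain ⟨x, rfl⟩ := Quotient.exists_rep a
    obtain ⟨y, rfl⟩ := Quotient.exists_rep b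
    exact Quotient.sound (ile_antisymm' huv ((iLeQ_mk u v x y).1 hab) ((iLeQ_mk u v y x).1 hba))
  have hsup : ∀ a b : Quotient (irelSetoid u v), ∃ c, iLeQ u v a c ∧ iLeQ u v b c ∧
      ∀ d, iLeQ u v a d → iLeQ u v b d → iLeQ u v c d := by
    intro a b
    obtain ⟨x, rfl⟩ := Quotient.exists_rep a
    obtain ⟨y, rfl⟩ := Quotient.exists_rep b
    obtain ⟨z, h1, h2, h3⟩ := ile_sup huv hp x y
    refine ⟨Quotient.mk (irelSetoid u v) z, (iLeQ_mk u v x z).2 h1, (iLeQ_mk u v y z).2 h2, ?_⟩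
    intro d hd1 hd2
    obtain ⟨w, rfl⟩ := Quotient.exists_rep d
    exact (iLeQ_mk u v z w).2 (h3 w ((iLeQ_mk u v x w).1 hd1) ((iLeQ_mk u v y w).1 hd2))
  refine ⟨hp, hrefl, htrans, hanti, hsup, ?_⟩
  intro a b
  letI hPO : PartialOrder (Quotient (irelSetoid u v)) :=
    { le := iLeQ u v
      le_refl := fun p => hrefl p
      le_trans := fun _ _ _ h h' => htrans h h'
      lt := fun p q => iLeQ u v p q ∧ ¬ iLeQ u v q p
      lt_iff_le_not_ge := fun _ _ => Iff.rfl
      le_antisymm := hanti }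
  set LB : Set (Quotient (irelSetoid u v)) := {c | iLeQ u v c a ∧ iLeQ u v c b} with hLB
  obtain ⟨x, hx⟩ := Quotient.exists_rep a
  obtain ⟨y, hy⟩ := Quotient.exists_rep b
  have hne : LB.Nonempty := by
    refine ⟨Quotient.mk (irelSetoid u v) (x ⊓ y), ?_, ?_⟩
    · rw [← hx]; exact (iLeQ_mk u v _ x).2 (ile_of_le inf_le_left)
    · rw [← hy]; exact (iLeQ_mk u v _ y).2 (ile_of_le inf_le_right)
  obtain ⟨c, hcLB, hcmax⟩ := @Set.Finite.exists_maximalFor _ _ hPO.toLE ⟨fun _ _ _ h h' => htrans h h'⟩ id LB (Set.toFinite LB) hne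
  refine ⟨c, hcLB.1, hcLB.2, ?_⟩
  intro d hd1 hd2
  obtain ⟨dx, rfl⟩ := Quotient.exists_rep d
  obtain ⟨cx, hc⟩ := Quotient.exists_rep c
  obtain ⟨z, h1, h2, h3⟩ := ile_sup huv hp dx cx
  have hca : iLeQ u v (Quotient.mk (irelSetoid u v) cx) a := hc ▸ hcLB.1
  have hcb : iLeQ u v (Quotient.mk (irelSetoid u v) cx) b := hc ▸ hcLB.2
  have hza : iLeQ u v (Quotient.mk (irelSetoid u v) z) a := by
    rw [← hx] at hd1 hca ⊢
    exact (iLeQ_mk u v z x).2 (h3 x ((iLeQ_mk u v dx x).1 hd1) ((iLeQ_mk u v cx x).1 hca))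
  have hzb : iLeQ u v (Quotient.mk (irelSetoid u v) z) b := by
    rw [← hy] at hd2 hcb ⊢
    exact (iLeQ_mk u v z y).2 (h3 y ((iLeQ_mk u v dx y).1 hd2) ((iLeQ_mk u v cx y).1 hcb))
  have hcz : iLeQ u v c (Quotient.mk (irelSetoid u v) z) := by
    rw [← hc]; exact (iLeQ_mk u v cx z).2 h2
  have hce : c = Quotient.mk (irelSetoid u v) z :=
    hanti _ _ hcz (hcmax ⟨hza, hzb⟩ hcz)
  rw [hce]
  exact (iLeQ_mk u v dx z).2 h1
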